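/- arXiv:2204.08170 — 3 statements merged into one kernel-verified Lean document; each statement's English description precedes it below -/
import Mathlib

section
/- For real parameters a(s) = -4s(s-1)^2, b(s) = -s(5s^2-10s+4), c(s) = 4(s-1)(2s-1), and the polynomials x1 = -(a-b+2s^3)(a+b+cs+s^3), x2 = 2bc(1-s) - (a-b)s^3 - b^2, x3 = b(a-b+s^3) + s^3(a+s^3-2c(1-s)), y1 = -(a-b+2s^3)(a-2c(s-1)), y2 = s^3(2b-a-cs) + c^2 s(s-2), y3 = acs - b^2 - bs^3 - s^6, z1 = -(a+s^3)(a+s^3+cs) - s^3(a-b+2s^3), z2 = s^3(a-b+s^3), z3 = s^6, the determinant of the 4x4 matrix with rows (0, c(s-2), b-a, c), (x1, x2, x3, -c(b-s^3)), (y1, y2, y3, -c(b-s^3)), (z1, z2, z3, 0) equals 64 s^8 (s-2)^3 (s-1)^3 (2s-1)^3 (3s-2)^2 (5s-4). -/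
noncomputable section

def a (s : ℝ) : ℝ := -4*s*(s-1)^2
def b (s : ℝ) : ℝ := -s*(5*s^2-10*s+4)
def c (s : ℝ) : ℝ := 4*(s-1)*(2*s-1)
def x1 (s : ℝ) : ℝ := -(a s - b s + 2*s^3)*(a s + b s + c s * s + s^3)
def x2 (s : ℝ) : ℝ := 2*(b s)*(c s)*(1-s) - (a s - b s)*s^3 - (b s)^2
def x3 (s : ℝ) : ℝ := b s * (a s - b s + s^3) + s^3*(a s + s^3 - 2*(c s)*(1-s))
def y1 (s : ℝ) : ℝ := -(a s - b s + 2*s^3)*(a s - 2*(c s)*(s-1))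
def y2 (s : ℝ) : ℝ := s^3*(2*(b s) - a s - (c s)*s) + (c s)^2*s*(s-2)
def y3 (s : ℝ) : ℝ := a s * c s * s - (b s)^2 - (b s)*s^3 - s^6
def z1 (s : ℝ) : ℝ := -(a s + s^3)*(a s + s^3 + (c s)*s) - s^3*(a s - b s + 2*s^3)
def z2 (s : ℝ) : ℝ := s^3*(a s - b s + s^3)
def z3 (s : ℝ) : ℝ := s^6

def M (s : ℝ) : Matrix (Fin 4) (Fin 4) ℝ :=
  !![0, (c s)*(s-2), b s - a s, c s;
     x1 s, x2 s, x3 s, -(c s)*(b s - s^3);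
     y1 s, y2 s, y3 s, -(c s)*(b s - s^3);
     z1 s, z2 s, z3 s, 0]

set_option maxHeartbeats 1000000 in
lemma det_fin_four' (a11 a12 a13 a14 a21 a22 a23 a24 a31 a32 a33 a34 a41 a42 a43 a44 : ℝ) :
    (!![a11,a12,a13,a14; a21,a22,a23,a24; a31,a32,a33,a34; a41,a42,a43,a44]).det =
      a11*(a22*(a33*a44-a34*a43)-a23*(a32*a44-a34*a42)+a24*(a32*a43-a33*a42))
    - a12*(a21*(a33*a44-a34*a43)-a23*(a31*a44-a34*a41)+a24*(a31*a43-a33*a41))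
    + a13*(a21*(a32*a44-a34*a42)-a22*(a31*a44-a34*a41)+a24*(a31*a42-a32*a41))
    - a14*(a21*(a32*a43-a33*a42)-a22*(a31*a43-a33*a41)+a23*(a31*a42-a32*a41)) := by
  rw [Matrix.det_succ_row_zero]
  simp [Fin.sum_univ_succ, Matrix.det_fin_three, Matrix.submatrix_apply, Fin.succAbove, (show (Fin.castSucc 2 : Fin 4) = 2 from rfl)]
  ring

set_option maxHeartbeats 4000000 in
theorem stmt_0 (s : ℝ) :
    (M s).det = 64 * s^8 * (s-2)^3 * (s-1)^3 * (2*s-1)^3 * (3*s-2)^2 * (5*s-4) := by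
  rw [M, det_fin_four']
  simp only [a, b, c, x1, x2, x3, y1, y2, y3, z1, z2, z3]
  ring

end
end

section
/- For every real number s not in {0, 1/2, 2/3, 4/5, 1, 2}, the 4x4 real matrix with rows (0, c(s-2), b-a, c), (x1, x2, x3, -c(b-s^3)), (y1, y2, y3, -c(b-s^3)), (z1, z2, z3, 0) — with a, b, c, x_i, y_i, z_i as defined from s — is invertible; consequently, if a vector (A, B, C, D) in C^4 is in its kernel then A = B = C = D = 0. -/
noncomputable section

lemma det_M (s : ℝ) :
    (M s).det = 64*s^8*(2*s-1)^3*(3*s-2)^2*(5*s-4)*(s-1)^3*(s-2)^3 := by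
  simp only [M, Matrix.det_succ_row_zero, Fin.sum_univ_succ, a, b, c, x1, x2, x3,
    y1, y2, y3, z1, z2, z3, Matrix.submatrix_apply, Matrix.det_fin_zero,
    Fin.succAbove_zero, Matrix.cons_val', Matrix.cons_val_zero, Matrix.cons_val_one,
    Matrix.head_cons, Matrix.head_fin_const, Matrix.empty_val', Matrix.cons_val_fin_one,
    Matrix.submatrix_submatrix, Fin.sum_univ_zero, Matrix.det_unique, Fin.succ_zero_eq_one,
    Fin.succ_one_eq_two, Function.comp]
  norm_num [Fin.succAbove, Fin.lt_def, Fin.ext_iff, Matrix.cons_val_succ,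
    show Fin.castSucc (2 : Fin 3) = (2 : Fin 4) from rfl, Matrix.cons_val_two,
    Matrix.tail_cons, Matrix.head_cons]
  ring

theorem stmt_1 (s : ℝ) (hs : s ∉ ({0, 1/2, 2/3, 4/5, 1, 2} : Set ℝ)) :
    IsUnit (M s) ∧
      ∀ v : Fin 4 → ℂ, ((M s).map (Complex.ofReal)).mulVec v = 0 → v = 0 := by
  simp only [Set.mem_insert_iff, Set.mem_singleton_iff, not_or] at hs
  obtain ⟨h0, h12, h23, h45, h1, h2⟩ := hs
  have hdet : (M s).det ≠ 0 := by
    rw [det_M]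
    have e1 : 2*s-1 ≠ 0 := by intro h; apply h12; linarith
    have e2 : 3*s-2 ≠ 0 := by intro h; apply h23; linarith
    have e3 : 5*s-4 ≠ 0 := by intro h; apply h45; linarith
    have e4 : s-1 ≠ 0 := sub_ne_zero.mpr h1
    have e5 : s-2 ≠ 0 := sub_ne_zero.mpr h2
    positivity
  constructor
  · rw [Matrix.isUnit_iff_isUnit_det, isUnit_iff_ne_zero]
    exact hdet
  · intro v hv
    set N := (M s).map (Complex.ofReal) with hN
    have hdetN : N.det ≠ 0 := by
      have : N.det = Complex.ofReal ((M s).det) :=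
        (RingHom.map_det Complex.ofRealHom (M s)).symm
      rw [this]
      exact_mod_cast hdet
    have hinv : N⁻¹ * N = 1 := Matrix.nonsing_inv_mul N (isUnit_iff_ne_zero.mpr hdetN)
    calc v = (N⁻¹ * N).mulVec v := by rw [hinv, Matrix.one_mulVec]
    _ = N⁻¹.mulVec (N.mulVec v) := by rw [Matrix.mulVec_mulVec]
    _ = 0 := by rw [hv, Matrix.mulVec_zero]


end
end

section
/- Let n ≥ 1, s ≠ 1 a real number, and T : Fin n → Fin n → Fin n → C an array antisymmetric in its lower indices (T^k_{ij} = -T^k_{ji}) satisfying the cyclic quadratic relation ∑_r (T^r_{jk} T^l_{ir} + T^r_{ki} T^l_{jr} + T^r_{ij} T^l_{kr}) = 0 for all i, j, k, l. Define η_j = ∑_k T^k_{kj}, A = ∑ T^k_{pj} T^r_{kl} conj(T^r_{pl}) conj(η_j), and Ã = ∑ T^k_{pl} T^r_{kj} conj(T^r_{pl}) conj(η_j). Then Ã = 2A. -/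
theorem stmt_7 (n : ℕ) (hn : 1 ≤ n) (s : ℝ) (hs : s ≠ 1)
    (T : Fin n → Fin n → Fin n → ℂ)
    (hT : ∀ i j k, T i j k = -T j i k)
    (hcyc : ∀ i j k l, ∑ r, (T j k r * T i r l + T k i r * T j r l + T i j r * T k r l) = 0) :
    let η : Fin n → ℂ := fun j => ∑ k, T k j k
    let A : ℂ := ∑ k, ∑ p, ∑ j, ∑ r, ∑ l,
      T p j k * T k l r * (starRingEnd ℂ) (T p l r) * (starRingEnd ℂ) (η j)
    let Atilde : ℂ := ∑ k, ∑ p, ∑ j, ∑ r, ∑ l,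
      T p l k * T k j r * (starRingEnd ℂ) (T p l r) * (starRingEnd ℂ) (η j)
    Atilde = 2 * A := by
  intro η A Atilde
  have move : ∀ F : Fin n → Fin n → Fin n → Fin n → Fin n → ℂ,
      (∑ x : Fin n × Fin n × Fin n × Fin n, ∑ k, F k x.1 x.2.1 x.2.2.1 x.2.2.2)
      = ∑ k, ∑ p, ∑ j, ∑ r, ∑ l, F k p j r l := by
    intro F
    rw [Finset.sum_comm]
    simp only [Fintype.sum_prod_type]
  -- key algebraic consequence of the cyclic identity and antisymmetry
  have key : ∀ p j r l : Fin n, (∑ k, T p l k * T k j r)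
      = (∑ k, T l j k * T p k r) + (∑ k, T j p k * T l k r) := by
    intro p j r l
    have h := hcyc p l j r
    rw [Finset.sum_add_distrib, Finset.sum_add_distrib] at h
    have h2 : (∑ k, T p l k * T k j r) = -∑ k, T p l k * T j k r := by
      rw [← Finset.sum_neg_distrib]
      refine Finset.sum_congr rfl fun k _ => ?_
      simp only [hT k j, mul_neg]
    rw [h2]; linear_combination -h
  -- product-form expression of A
  have hA : A = ∑ x : Fin n × Fin n × Fin n × Fin n,
      (∑ k, T x.1 x.2.1 k * T k x.2.2.2 x.2.2.1) *
        ((starRingEnd ℂ) (T x.1 x.2.2.2 x.2.2.1) * (starRingEnd ℂ) (η x.2.1)) := by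
    show (∑ k, ∑ p, ∑ j, ∑ r, ∑ l,
      T p j k * T k l r * (starRingEnd ℂ) (T p l r) * (starRingEnd ℂ) (η j)) = _
    rw [← move]
    refine Finset.sum_congr rfl fun x _ => ?_
    rw [Finset.sum_mul]
    exact Finset.sum_congr rfl fun k _ => by ring
  -- product-form expression of Atilde
  have hAt : Atilde = ∑ x : Fin n × Fin n × Fin n × Fin n,
      (∑ k, T x.1 x.2.2.2 k * T k x.2.1 x.2.2.1) *
        ((starRingEnd ℂ) (T x.1 x.2.2.2 x.2.2.1) * (starRingEnd ℂ) (η x.2.1)) := by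
    show (∑ k, ∑ p, ∑ j, ∑ r, ∑ l,
      T p l k * T k j r * (starRingEnd ℂ) (T p l r) * (starRingEnd ℂ) (η j)) = _
    rw [← move]
    refine Finset.sum_congr rfl fun x _ => ?_
    rw [Finset.sum_mul]
    exact Finset.sum_congr rfl fun k _ => by ring
  rw [hAt, hA]
  have split : ∀ x : Fin n × Fin n × Fin n × Fin n,
      (∑ k, T x.1 x.2.2.2 k * T k x.2.1 x.2.2.1) *
        ((starRingEnd ℂ) (T x.1 x.2.2.2 x.2.2.1) * (starRingEnd ℂ) (η x.2.1))
      = (∑ k, T x.2.2.2 x.2.1 k * T x.1 k x.2.2.1) *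
          ((starRingEnd ℂ) (T x.1 x.2.2.2 x.2.2.1) * (starRingEnd ℂ) (η x.2.1))
        + (∑ k, T x.1 x.2.1 k * T k x.2.2.2 x.2.2.1) *
          ((starRingEnd ℂ) (T x.1 x.2.2.2 x.2.2.1) * (starRingEnd ℂ) (η x.2.1)) := by
    intro x
    obtain ⟨p, j, r, l⟩ := x
    have h3 : (∑ k, T j p k * T l k r) = ∑ k, T p j k * T k l r := by
      refine Finset.sum_congr rfl fun k _ => ?_
      simp only [hT j p, hT l k, neg_mul, mul_neg, neg_neg]
    rw [key p j r l, h3, add_mul]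
  rw [Finset.sum_congr rfl fun x _ => split x, Finset.sum_add_distrib]
  -- identify the first piece with A via the swap p ↔ l
  have first : (∑ x : Fin n × Fin n × Fin n × Fin n,
      (∑ k, T x.2.2.2 x.2.1 k * T x.1 k x.2.2.1) *
        ((starRingEnd ℂ) (T x.1 x.2.2.2 x.2.2.1) * (starRingEnd ℂ) (η x.2.1)))
      = ∑ x : Fin n × Fin n × Fin n × Fin n,
      (∑ k, T x.1 x.2.1 k * T k x.2.2.2 x.2.2.1) *
        ((starRingEnd ℂ) (T x.1 x.2.2.2 x.2.2.1) * (starRingEnd ℂ) (η x.2.1)) := by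
    refine Fintype.sum_equiv
      ⟨fun x => (x.2.2.2, x.2.1, x.2.2.1, x.1),
       fun x => (x.2.2.2, x.2.1, x.2.2.1, x.1),
       fun x => rfl, fun x => rfl⟩ _ _ fun x => ?_
    obtain ⟨p, j, r, l⟩ := x
    simp only [Equiv.coe_fn_mk]
    have h4 : (∑ k, T l j k * T k p r) = -∑ k, T l j k * T p k r := by
      rw [← Finset.sum_neg_distrib]
      refine Finset.sum_congr rfl fun k _ => ?_
      simp only [hT k p, mul_neg]
    have h5 : (starRingEnd ℂ) (T l p r) = -(starRingEnd ℂ) (T p l r) := by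
      rw [hT l p]; simp
    rw [h4, h5]
    ring
  rw [first]
  ring
end
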